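/- arXiv:2501.02896 — 4 statements merged into one kernel-verified Lean document; each statement's English description precedes it below -/
import Mathlib

section
/- Let K and L be convex bodies in ℝⁿ such that K ∪ L is convex. Then (K ∪ L) + (K ∩ L) = K + L, where + denotes Minkowski addition. -/
open Pointwise

/-- **Sallee's theorem**: if `K` and `L` are convex bodies in `ℝⁿ` with `K ∪ L` convex,
then `(K ∪ L) + (K ∩ L) = K + L` (Minkowski addition). -/
theorem sallee_union_inter_add {n : ℕ} (K L : Set (EuclideanSpace ℝ (Fin n)))
    (hKne : K.Nonempty) (hKcomp : IsCompact K) (hKconv : Convex ℝ K)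
    (hLne : L.Nonempty) (hLcomp : IsCompact L) (hLconv : Convex ℝ L)
    (hUnion : Convex ℝ (K ∪ L)) :
    (K ∪ L) + (K ∩ L) = K + L := by
  apply Set.Subset.antisymm
  · rintro x ⟨a, ha, b, ⟨hbK, hbL⟩, rfl⟩
    rcases ha with haK | haL
    · exact ⟨a, haK, b, hbL, rfl⟩
    · exact ⟨b, hbK, a, haL, by abel⟩
  · rintro x ⟨k, hk, l, hl, rfl⟩
    set g : ℝ → EuclideanSpace ℝ (Fin n) := fun t => (1 - t) • k + t • l with hg
    have hgc : Continuous g := by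
      continuity
    have hconn := isPreconnected_Icc (a := (0:ℝ)) (b := 1)
    rw [isPreconnected_closed_iff] at hconn
    have hcov : Set.Icc (0:ℝ) 1 ⊆ g ⁻¹' K ∪ g ⁻¹' L := by
      intro t ht
      have := hUnion (Set.mem_union_left _ hk) (Set.mem_union_right _ hl)
        (by linarith [ht.2] : (0:ℝ) ≤ 1 - t) ht.1 (by ring)
      exact this
    have h0 : (0:ℝ) ∈ Set.Icc (0:ℝ) 1 ∩ g ⁻¹' K := by
      constructor
      · simp
      · show g 0 ∈ K
        simp [hg, hk]
    have h1 : (1:ℝ) ∈ Set.Icc (0:ℝ) 1 ∩ g ⁻¹' L := by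
      constructor
      · simp
      · show g 1 ∈ L
        simp [hg, hl]
    obtain ⟨t, htI, htK, htL⟩ := hconn (g ⁻¹' K) (g ⁻¹' L)
      (hKcomp.isClosed.preimage hgc) (hLcomp.isClosed.preimage hgc) hcov ⟨0, h0⟩ ⟨1, h1⟩
    refine ⟨t • k + (1 - t) • l, ?_, g t, ⟨htK, htL⟩, ?_⟩
    · exact hUnion (Set.mem_union_left _ hk) (Set.mem_union_right _ hl)
        htI.1 (by linarith [htI.2]) (by ring)
    · simp only [hg]
      module
end

section
/- Let K, L, A be convex bodies in ℝⁿ with K ∪ L convex. Then (K + A) ∪ (L + A) = (K ∪ L) + A and (K + A) ∩ (L + A) = (K ∩ L) + A. In particular (K + A) ∪ (L + A) is convex. -/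
open Pointwise

/-- If `K`, `L`, `A` are convex bodies with `K ∪ L` convex, then
`(K + A) ∪ (L + A) = (K ∪ L) + A` and `(K + A) ∩ (L + A) = (K ∩ L) + A`;
in particular `(K + A) ∪ (L + A)` is convex. -/
theorem minkowski_union_inter_translate {n : ℕ}
    (K L A : Set (EuclideanSpace ℝ (Fin n)))
    (hKne : K.Nonempty) (hKcomp : IsCompact K) (hKconv : Convex ℝ K)
    (hLne : L.Nonempty) (hLcomp : IsCompact L) (hLconv : Convex ℝ L)
    (hAne : A.Nonempty) (hAcomp : IsCompact A) (hAconv : Convex ℝ A)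
    (hUnion : Convex ℝ (K ∪ L)) :
    (K + A) ∪ (L + A) = (K ∪ L) + A ∧
    (K + A) ∩ (L + A) = (K ∩ L) + A ∧
    Convex ℝ ((K + A) ∪ (L + A)) := by
  have hu : (K + A) ∪ (L + A) = (K ∪ L) + A := (Set.union_add ..).symm
  refine ⟨hu, ?_, ?_⟩
  · apply Set.Subset.antisymm
    · rintro x ⟨hx1, hx2⟩
      obtain ⟨k, hk, p, hp, rfl⟩ := hx1
      obtain ⟨l, hl, q, hq, hlq⟩ := hx2
      -- segment from k to l lies in K ∪ L; find a point in K ∩ L on it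
      have hseg : segment ℝ k l ⊆ K ∪ L :=
        hUnion.segment_subset (Set.mem_union_left _ hk) (Set.mem_union_right _ hl)
      have hconn : IsPreconnected (segment ℝ k l) := (convex_segment k l).isPreconnected
      have := isPreconnected_closed_iff.mp hconn K L hKcomp.isClosed hLcomp.isClosed hseg
        ⟨k, left_mem_segment ℝ k l, hk⟩ ⟨l, right_mem_segment ℝ k l, hl⟩
      obtain ⟨m, hm_seg, hmK, hmL⟩ := this
      obtain ⟨s, t, hs, ht, hst, hm⟩ := hm_seg
      refine ⟨m, ⟨hmK, hmL⟩, s • p + t • q, hAconv hp hq hs ht hst, ?_⟩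
      have : m + (s • p + t • q) = s • (k + p) + t • (l + q) := by
        rw [← hm]; module
      show m + (s • p + t • q) = k + p
      have hlq' : l + q = k + p := hlq
      rw [this, hlq', ← add_smul, hst, one_smul]
    · exact Set.subset_inter
        (Set.add_subset_add Set.inter_subset_left subset_rfl)
        (Set.add_subset_add Set.inter_subset_right subset_rfl)
  · rw [hu]; exact hUnion.add hAconv
end

section
/- On the space Δ of functions on ℝⁿ that are differences of two convex positively 1-homogeneous functions, the quantity ‖f‖ = inf{ ‖ψ‖₀ + ‖φ‖₀ : f = ψ − φ, ψ, φ convex and 1-homogeneous }, where ‖g‖₀ = sup_{|x|=1}|g(x)|, is a norm, and Δ equipped with this norm is complete. -/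
/-- A convex, positively 1-homogeneous function on `ℝⁿ`. -/
def Hom1Convex {n : ℕ} (ψ : EuclideanSpace ℝ (Fin n) → ℝ) : Prop :=
  ConvexOn ℝ Set.univ ψ ∧ ∀ t : ℝ, 0 ≤ t → ∀ x, ψ (t • x) = t * ψ x

/-- Membership in `Δ`: differences of convex positively 1-homogeneous functions. -/
def InDelta {n : ℕ} (f : EuclideanSpace ℝ (Fin n) → ℝ) : Prop :=
  ∃ ψ φ, Hom1Convex ψ ∧ Hom1Convex φ ∧ f = ψ - φ

/-- Sup norm on the unit sphere. -/
noncomputable def sphereSup {n : ℕ} (g : EuclideanSpace ℝ (Fin n) → ℝ) : ℝ :=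
  sSup ((fun x => |g x|) '' Metric.sphere (0 : EuclideanSpace ℝ (Fin n)) 1)

/-- The norm `‖f‖ = inf{‖ψ‖₀ + ‖φ‖₀ : f = ψ − φ}` on `Δ`. -/
noncomputable def deltaNorm {n : ℕ} (f : EuclideanSpace ℝ (Fin n) → ℝ) : ℝ :=
  sInf {a | ∃ ψ φ, Hom1Convex ψ ∧ Hom1Convex φ ∧ f = ψ - φ ∧
    a = sphereSup ψ + sphereSup φ}

set_option maxHeartbeats 1000000

open Metric Set Filter Pointwise

section Aux
variable {n : ℕ}

lemma hom_zero {ψ : EuclideanSpace ℝ (Fin n) → ℝ} (h : Hom1Convex ψ) : ψ 0 = 0 := by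
  have := h.2 0 le_rfl 0; simpa using this

lemma hom_cont {ψ : EuclideanSpace ℝ (Fin n) → ℝ} (h : Hom1Convex ψ) : Continuous ψ :=
  h.1.locallyLipschitz.continuous

lemma sphereSup_nonneg (g : EuclideanSpace ℝ (Fin n) → ℝ) : 0 ≤ sphereSup g :=
  Real.sSup_nonneg (by rintro a ⟨x, _, rfl⟩; exact abs_nonneg _)

lemma hom_bdd {ψ : EuclideanSpace ℝ (Fin n) → ℝ} (h : Hom1Convex ψ) :
    BddAbove ((fun x => |ψ x|) '' Metric.sphere (0 : EuclideanSpace ℝ (Fin n)) 1) :=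
  (isCompact_sphere 0 1).bddAbove_image ((hom_cont h).abs.continuousOn)

lemma sphereSup_le {g : EuclideanSpace ℝ (Fin n) → ℝ} {c : ℝ} (hc : 0 ≤ c)
    (h : ∀ x ∈ Metric.sphere (0 : EuclideanSpace ℝ (Fin n)) 1, |g x| ≤ c) :
    sphereSup g ≤ c :=
  Real.sSup_le (by rintro a ⟨x, hx, rfl⟩; exact h x hx) hc

lemma abs_le_sphereSup {ψ : EuclideanSpace ℝ (Fin n) → ℝ} (h : Hom1Convex ψ) (x) :
    |ψ x| ≤ sphereSup ψ * ‖x‖ := by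
  rcases eq_or_ne x 0 with rfl | hx
  · simp [hom_zero h]
  · have hnx : (0:ℝ) < ‖x‖ := norm_pos_iff.mpr hx
    have hu : (‖x‖⁻¹ • x) ∈ Metric.sphere (0 : EuclideanSpace ℝ (Fin n)) 1 := by
      simp [norm_smul, abs_of_pos (inv_pos.mpr hnx), inv_mul_cancel₀ hnx.ne']
    have hval : ψ x = ‖x‖ * ψ (‖x‖⁻¹ • x) := by
      have := h.2 ‖x‖ (norm_nonneg x) (‖x‖⁻¹ • x)
      rwa [smul_smul, mul_inv_cancel₀ hnx.ne', one_smul] at this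
    have hle : |ψ (‖x‖⁻¹ • x)| ≤ sphereSup ψ := le_csSup (hom_bdd h) ⟨_, hu, rfl⟩
    rw [hval, abs_mul, abs_of_pos hnx, mul_comm]
    exact mul_le_mul_of_nonneg_right hle hnx.le

lemma Hom1Convex.add {ψ φ : EuclideanSpace ℝ (Fin n) → ℝ} (h1 : Hom1Convex ψ)
    (h2 : Hom1Convex φ) : Hom1Convex (fun x => ψ x + φ x) := by
  refine ⟨h1.1.add h2.1, fun t ht x => ?_⟩
  simp [h1.2 t ht, h2.2 t ht]; ring

lemma Hom1Convex.zero : Hom1Convex (fun _ : EuclideanSpace ℝ (Fin n) => (0:ℝ)) :=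
  ⟨convexOn_const 0 convex_univ, by simp⟩

lemma Hom1Convex.smul {ψ : EuclideanSpace ℝ (Fin n) → ℝ} (h : Hom1Convex ψ) {c : ℝ}
    (hc : 0 ≤ c) : Hom1Convex (fun x => c * ψ x) := by
  refine ⟨?_, fun t ht x => by simp only []; rw [h.2 t ht]; ring⟩
  have := h.1.smul hc
  simpa [Pi.smul_def, smul_eq_mul] using this

lemma sphereSup_add_le {ψ φ : EuclideanSpace ℝ (Fin n) → ℝ} (h1 : Hom1Convex ψ)
    (h2 : Hom1Convex φ) :
    sphereSup (fun x => ψ x + φ x) ≤ sphereSup ψ + sphereSup φ := by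
  refine sphereSup_le (add_nonneg (sphereSup_nonneg _) (sphereSup_nonneg _)) (fun x hx => ?_)
  have hx1 : ‖x‖ = 1 := by simpa using hx
  have b1 := abs_le_sphereSup h1 x
  have b2 := abs_le_sphereSup h2 x
  rw [hx1, mul_one] at b1 b2
  calc |ψ x + φ x| ≤ |ψ x| + |φ x| := abs_add_le _ _
    _ ≤ _ := add_le_add b1 b2

lemma sphereSup_smul (c : ℝ) (hc : 0 ≤ c) (ψ : EuclideanSpace ℝ (Fin n) → ℝ) :
    sphereSup (fun x => c * ψ x) = c * sphereSup ψ := by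
  unfold sphereSup
  rw [← smul_eq_mul, ← Real.sSup_smul_of_nonneg hc]
  congr 1
  ext a
  constructor
  · rintro ⟨x, hx, rfl⟩
    exact ⟨|ψ x|, ⟨x, hx, rfl⟩, by simp [abs_mul, abs_of_nonneg hc, smul_eq_mul]⟩
  · rintro ⟨b, ⟨x, hx, rfl⟩, rfl⟩
    exact ⟨x, hx, by simp [abs_mul, abs_of_nonneg hc, smul_eq_mul]⟩



def deltaSet (f : EuclideanSpace ℝ (Fin n) → ℝ) : Set ℝ :=
  {a | ∃ ψ φ, Hom1Convex ψ ∧ Hom1Convex φ ∧ f = ψ - φ ∧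
    a = sphereSup ψ + sphereSup φ}

lemma deltaNorm_eq (f : EuclideanSpace ℝ (Fin n) → ℝ) :
    deltaNorm f = sInf (deltaSet f) := rfl

lemma deltaSet_nonneg {f : EuclideanSpace ℝ (Fin n) → ℝ} {a : ℝ} (h : a ∈ deltaSet f) :
    0 ≤ a := by
  obtain ⟨ψ, φ, _, _, _, rfl⟩ := h
  exact add_nonneg (sphereSup_nonneg _) (sphereSup_nonneg _)

lemma deltaSet_bddBelow (f : EuclideanSpace ℝ (Fin n) → ℝ) : BddBelow (deltaSet f) :=
  ⟨0, fun _ h => deltaSet_nonneg h⟩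

lemma deltaSet_nonempty {f : EuclideanSpace ℝ (Fin n) → ℝ} (hf : InDelta f) :
    (deltaSet f).Nonempty := by
  obtain ⟨ψ, φ, h1, h2, h3⟩ := hf
  exact ⟨_, ψ, φ, h1, h2, h3, rfl⟩

lemma deltaNorm_nonneg (f : EuclideanSpace ℝ (Fin n) → ℝ) : 0 ≤ deltaNorm f :=
  Real.sInf_nonneg (fun _ h => deltaSet_nonneg h)

lemma deltaNorm_le {f : EuclideanSpace ℝ (Fin n) → ℝ} {a : ℝ} (h : a ∈ deltaSet f) :
    deltaNorm f ≤ a := csInf_le (deltaSet_bddBelow f) h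

lemma mem_deltaSet_abs_le {f : EuclideanSpace ℝ (Fin n) → ℝ} {a : ℝ}
    (h : a ∈ deltaSet f) (x : EuclideanSpace ℝ (Fin n)) : |f x| ≤ a * ‖x‖ := by
  obtain ⟨ψ, φ, h1, h2, h3, rfl⟩ := h
  have hfx : f x = ψ x - φ x := by rw [h3]; simp
  rw [hfx]
  calc |ψ x - φ x| ≤ |ψ x| + |φ x| := abs_sub _ _
    _ ≤ sphereSup ψ * ‖x‖ + sphereSup φ * ‖x‖ :=
        add_le_add (abs_le_sphereSup h1 x) (abs_le_sphereSup h2 x)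
    _ = _ := by ring

lemma abs_le_deltaNorm {f : EuclideanSpace ℝ (Fin n) → ℝ} (hf : InDelta f)
    (x : EuclideanSpace ℝ (Fin n)) : |f x| ≤ deltaNorm f * ‖x‖ := by
  rcases eq_or_ne x 0 with rfl | hx
  · obtain ⟨ψ, φ, h1, h2, h3⟩ := hf
    have : f 0 = 0 := by rw [h3]; simp [hom_zero h1, hom_zero h2]
    simp [this]
  · have hnx : (0:ℝ) < ‖x‖ := norm_pos_iff.mpr hx
    rw [← div_le_iff₀ hnx] at *
    rw [deltaNorm_eq]
    refine le_csInf (deltaSet_nonempty hf) (fun a ha => ?_)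
    rw [div_le_iff₀ hnx]
    exact mem_deltaSet_abs_le ha x

lemma sphereSup_zero : sphereSup (fun _ : EuclideanSpace ℝ (Fin n) => (0:ℝ)) = 0 :=
  le_antisymm (sphereSup_le le_rfl (by simp)) (sphereSup_nonneg _)

lemma deltaNorm_zero : deltaNorm (0 : EuclideanSpace ℝ (Fin n) → ℝ) = 0 := by
  refine le_antisymm (deltaNorm_le ⟨_, _, Hom1Convex.zero, Hom1Convex.zero, by funext x; simp,
    by rw [sphereSup_zero]; ring⟩) (deltaNorm_nonneg _)

lemma smul_subset {c : ℝ} (hc : 0 < c) (f : EuclideanSpace ℝ (Fin n) → ℝ) :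
    c • deltaSet f ⊆ deltaSet (c • f) := by
  rintro _ ⟨a, ⟨ψ, φ, h1, h2, h3, rfl⟩, rfl⟩
  refine ⟨fun x => c * ψ x, fun x => c * φ x, h1.smul hc.le, h2.smul hc.le, ?_, ?_⟩
  · funext x
    have := congrFun h3 x
    simp only [Pi.sub_apply] at this
    simp [this]; ring
  · rw [sphereSup_smul _ hc.le, sphereSup_smul _ hc.le]
    simp [smul_eq_mul]; ring

lemma neg_smul_subset {c : ℝ} (hc : 0 < c) (f : EuclideanSpace ℝ (Fin n) → ℝ) :
    c • deltaSet f ⊆ deltaSet ((-c) • f) := by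
  rintro _ ⟨a, ⟨ψ, φ, h1, h2, h3, rfl⟩, rfl⟩
  refine ⟨fun x => c * φ x, fun x => c * ψ x, h2.smul hc.le, h1.smul hc.le, ?_, ?_⟩
  · funext x
    have := congrFun h3 x
    simp only [Pi.sub_apply] at this
    simp [this]; ring
  · rw [sphereSup_smul _ hc.le, sphereSup_smul _ hc.le]
    simp [smul_eq_mul]; ring

lemma abs_smul_subset {c : ℝ} (hc : c ≠ 0) (f : EuclideanSpace ℝ (Fin n) → ℝ) :
    |c| • deltaSet f ⊆ deltaSet (c • f) := by
  rcases lt_or_gt_of_ne hc with hneg | hpos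
  · have := neg_smul_subset (c := -c) (by linarith) f
    rw [abs_of_neg hneg, neg_neg] at *
    exact this
  · rw [abs_of_pos hpos]
    exact smul_subset hpos f

lemma deltaSet_smul {c : ℝ} (hc : c ≠ 0) (f : EuclideanSpace ℝ (Fin n) → ℝ) :
    deltaSet (c • f) = |c| • deltaSet f := by
  refine Subset.antisymm ?_ (abs_smul_subset hc f)
  have h2 := abs_smul_subset (c := c⁻¹) (inv_ne_zero hc) (c • f)
  rw [smul_smul, inv_mul_cancel₀ hc, one_smul] at h2
  have h3 : deltaSet (c • f) = |c| • (|c⁻¹| • deltaSet (c • f)) := by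
    rw [smul_smul, ← abs_mul, mul_inv_cancel₀ hc, abs_one, one_smul]
  rw [h3]
  exact smul_set_mono h2

lemma deltaNorm_smul (c : ℝ) (f : EuclideanSpace ℝ (Fin n) → ℝ) :
    deltaNorm (c • f) = |c| * deltaNorm f := by
  rcases eq_or_ne c 0 with rfl | hc
  · simp [zero_smul, deltaNorm_zero]
  · rw [deltaNorm_eq, deltaNorm_eq, deltaSet_smul hc, Real.sInf_smul_of_nonneg (abs_nonneg c),
      smul_eq_mul]

lemma InDelta.sub {f g : EuclideanSpace ℝ (Fin n) → ℝ} (hf : InDelta f) (hg : InDelta g) :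
    InDelta (f - g) := by
  obtain ⟨ψ1, φ1, h1, h2, h3⟩ := hf
  obtain ⟨ψ2, φ2, h4, h5, h6⟩ := hg
  refine ⟨fun x => ψ1 x + φ2 x, fun x => φ1 x + ψ2 x, h1.add h5, h2.add h4, ?_⟩
  funext x
  have e1 := congrFun h3 x; have e2 := congrFun h6 x
  simp only [Pi.sub_apply] at *
  rw [e1, e2]; ring

lemma deltaNorm_triangle {f g : EuclideanSpace ℝ (Fin n) → ℝ} (hf : InDelta f)
    (hg : InDelta g) : deltaNorm (f + g) ≤ deltaNorm f + deltaNorm g := by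
  have key : ∀ a ∈ deltaSet f, ∀ b ∈ deltaSet g, deltaNorm (f + g) ≤ a + b := by
    rintro _ ⟨ψ1, φ1, h1, h2, h3, rfl⟩ _ ⟨ψ2, φ2, h4, h5, h6, rfl⟩
    have hmem : sphereSup (fun x => ψ1 x + ψ2 x) + sphereSup (fun x => φ1 x + φ2 x)
        ∈ deltaSet (f + g) := by
      refine ⟨_, _, h1.add h4, h2.add h5, ?_, rfl⟩
      funext x
      have e1 := congrFun h3 x; have e2 := congrFun h6 x
      simp only [Pi.sub_apply, Pi.add_apply] at *
      rw [e1, e2]; ring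
    calc deltaNorm (f + g) ≤ _ := deltaNorm_le hmem
      _ ≤ _ := by
          have := sphereSup_add_le h1 h4
          have := sphereSup_add_le h2 h5
          linarith
  have step1 : ∀ b ∈ deltaSet g, deltaNorm (f + g) - b ≤ deltaNorm f := by
    intro b hb
    rw [deltaNorm_eq f]
    exact le_csInf (deltaSet_nonempty hf) (fun a ha => by linarith [key a ha b hb])
  have step2 : deltaNorm (f + g) - deltaNorm f ≤ deltaNorm g := by
    rw [deltaNorm_eq g]
    exact le_csInf (deltaSet_nonempty hg) (fun b hb => by linarith [step1 b hb])
  linarith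

lemma tsum_hom1Convex {ψ : ℕ → EuclideanSpace ℝ (Fin n) → ℝ} {c : ℕ → ℝ}
    (hψ : ∀ k, Hom1Convex (ψ k))
    (hb : ∀ k x, |ψ k x| ≤ c k * ‖x‖) (hsc : Summable c) :
    Hom1Convex (fun x => ∑' k, ψ k x) ∧
    ∀ x, |∑' k, ψ k x| ≤ (∑' k, c k) * ‖x‖ := by
  have habs : ∀ x, Summable (fun k => |ψ k x|) := fun x =>
    Summable.of_nonneg_of_le (fun k => abs_nonneg _) (fun k => hb k x) (hsc.mul_right ‖x‖)
  have hsum : ∀ x, Summable (fun k => ψ k x) := fun x => (habs x).of_abs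
  have hbound : ∀ x, |∑' k, ψ k x| ≤ (∑' k, c k) * ‖x‖ := by
    intro x
    calc |∑' k, ψ k x| ≤ ∑' k, |ψ k x| := by
          have h1 : Summable fun k => ‖ψ k x‖ := by simpa [Real.norm_eq_abs] using habs x
          simpa [Real.norm_eq_abs] using norm_tsum_le_tsum_norm h1
      _ ≤ ∑' k, c k * ‖x‖ := Summable.tsum_le_tsum (fun k => hb k x) (habs x) (hsc.mul_right ‖x‖)
      _ = (∑' k, c k) * ‖x‖ := tsum_mul_right
  refine ⟨⟨⟨convex_univ, ?_⟩, ?_⟩, hbound⟩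
  · intro x _ y _ a b ha hb' hab
    simp only [smul_eq_mul]
    calc ∑' k, ψ k (a • x + b • y) ≤ ∑' k, (a * ψ k x + b * ψ k y) := by
          refine Summable.tsum_le_tsum (fun k => ?_) ?_ ?_
          · have := (hψ k).1.2 (mem_univ x) (mem_univ y) ha hb' hab
            simpa [smul_eq_mul] using this
          · exact hsum _
          · exact ((hsum x).mul_left a).add ((hsum y).mul_left b)
      _ = a * ∑' k, ψ k x + b * ∑' k, ψ k y := by
          rw [Summable.tsum_add ((hsum x).mul_left a) ((hsum y).mul_left b), tsum_mul_left, tsum_mul_left]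
  · intro t ht x
    show (∑' k, ψ k (t • x)) = t * ∑' k, ψ k x
    rw [show (fun k => ψ k (t • x)) = fun k => t * ψ k x from funext fun k => (hψ k).2 t ht x]
    exact tsum_mul_left

lemma delta_complete (F : ℕ → (EuclideanSpace ℝ (Fin n) → ℝ)) (hInD : ∀ k, InDelta (F k))
    (hC : ∀ ε : ℝ, 0 < ε → ∃ N, ∀ m ≥ N, ∀ k ≥ N, deltaNorm (F m - F k) < ε) :
    ∃ g, InDelta g ∧
      Filter.Tendsto (fun k => deltaNorm (F k - g)) Filter.atTop (nhds 0) := by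
  choose N hN using fun j : ℕ => hC ((1/2 : ℝ)^j) (by positivity)
  set K : ℕ → ℕ := fun j => (Finset.range (j+1)).sup N with hK
  have hKmono : Monotone K := fun i j hij =>
    Finset.sup_mono (Finset.range_subset_range.mpr (by omega))
  have hKN : ∀ j, N j ≤ K j := fun j => Finset.le_sup (Finset.mem_range.mpr (by omega))
  have hdiffInD : ∀ j, InDelta (F (K (j+1)) - F (K j)) := fun j => (hInD _).sub (hInD _)
  have key : ∀ j, deltaNorm (F (K (j+1)) - F (K j)) < (1/2:ℝ)^j :=
    fun j => hN j _ (le_trans (hKN j) (hKmono (Nat.le_succ j))) _ (hKN j)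
  have hdec : ∀ j, ∃ p : (EuclideanSpace ℝ (Fin n) → ℝ) × (EuclideanSpace ℝ (Fin n) → ℝ),
      Hom1Convex p.1 ∧ Hom1Convex p.2 ∧
      (F (K (j+1)) - F (K j)) = p.1 - p.2 ∧
      sphereSup p.1 + sphereSup p.2 ≤ (1/2:ℝ)^j := by
    intro j
    obtain ⟨a, ha, halt⟩ := exists_lt_of_csInf_lt (deltaSet_nonempty (hdiffInD j)) (key j)
    obtain ⟨ψ, φ, h1, h2, h3, rfl⟩ := ha
    exact ⟨(ψ, φ), h1, h2, h3, halt.le⟩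
  choose p hψ hφ hdecomp hle using hdec
  set ψ : ℕ → EuclideanSpace ℝ (Fin n) → ℝ := fun j => (p j).1 with hψdef
  set φ : ℕ → EuclideanSpace ℝ (Fin n) → ℝ := fun j => (p j).2 with hφdef
  -- summability of the norms
  have hcψ : ∀ j, sphereSup (ψ j) ≤ (1/2:ℝ)^j := fun j =>
    le_trans (le_add_of_nonneg_right (sphereSup_nonneg _)) (hle j)
  have hcφ : ∀ j, sphereSup (φ j) ≤ (1/2:ℝ)^j := fun j =>
    le_trans (le_add_of_nonneg_left (sphereSup_nonneg _)) (hle j)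
  have hsψ : Summable (fun j => sphereSup (ψ j)) :=
    Summable.of_nonneg_of_le (fun j => sphereSup_nonneg _) hcψ summable_geometric_two
  have hsφ : Summable (fun j => sphereSup (φ j)) :=
    Summable.of_nonneg_of_le (fun j => sphereSup_nonneg _) hcφ summable_geometric_two
  -- tail sums
  have hΨ : ∀ m, Hom1Convex (fun x => ∑' j, ψ (j + m) x) ∧
      ∀ x, |∑' j, ψ (j + m) x| ≤ (∑' j, sphereSup (ψ (j + m))) * ‖x‖ := fun m =>
    tsum_hom1Convex (fun j => hψ (j + m)) (fun j x => abs_le_sphereSup (hψ (j + m)) x)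
      ((summable_nat_add_iff m).mpr hsψ)
  have hΦ : ∀ m, Hom1Convex (fun x => ∑' j, φ (j + m) x) ∧
      ∀ x, |∑' j, φ (j + m) x| ≤ (∑' j, sphereSup (φ (j + m))) * ‖x‖ := fun m =>
    tsum_hom1Convex (fun j => hφ (j + m)) (fun j x => abs_le_sphereSup (hφ (j + m)) x)
      ((summable_nat_add_iff m).mpr hsφ)
  have hsumψ : ∀ x, Summable (fun j => ψ j x) := fun x =>
    (Summable.of_nonneg_of_le (fun j => abs_nonneg _)
      (fun j => abs_le_sphereSup (hψ j) x) (hsψ.mul_right ‖x‖)).of_abs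
  have hsumφ : ∀ x, Summable (fun j => φ j x) := fun x =>
    (Summable.of_nonneg_of_le (fun j => abs_nonneg _)
      (fun j => abs_le_sphereSup (hφ j) x) (hsφ.mul_right ‖x‖)).of_abs
  obtain ⟨ψ0, φ0, hψ0, hφ0, hF0⟩ := hInD (K 0)
  set g : EuclideanSpace ℝ (Fin n) → ℝ :=
    fun x => (ψ0 x + ∑' j, ψ (j + 0) x) - (φ0 x + ∑' j, φ (j + 0) x) with hg
  have hgInD : InDelta g :=
    ⟨_, _, hψ0.add (hΨ 0).1, hφ0.add (hΦ 0).1, rfl⟩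
  -- telescoping
  have htel : ∀ m x, F (K m) x = F (K 0) x + ∑ j ∈ Finset.range m, (ψ j x - φ j x) := by
    intro m x
    induction m with
    | zero => simp
    | succ m ih =>
      have := congrFun (hdecomp m) x
      simp only [Pi.sub_apply] at this
      rw [Finset.sum_range_succ]
      linarith
  -- decomposition of F (K m) - g
  have hFmg : ∀ m, F (K m) - g =
      (fun x => ∑' j, φ (j + m) x) - (fun x => ∑' j, ψ (j + m) x) := by
    intro m
    funext x
    have e0 := congrFun hF0 x
    simp only [Pi.sub_apply] at e0 ⊢
    have eψ : (∑ j ∈ Finset.range m, ψ j x) + ∑' j, ψ (j + m) x = ∑' j, ψ (j + 0) x := by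
      simpa using Summable.sum_add_tsum_nat_add m (hsumψ x)
    have eφ : (∑ j ∈ Finset.range m, φ j x) + ∑' j, φ (j + m) x = ∑' j, φ (j + 0) x := by
      simpa using Summable.sum_add_tsum_nat_add m (hsumφ x)
    have hgx : g x = ψ0 x + (∑' j, ψ (j + 0) x) - (φ0 x + ∑' j, φ (j + 0) x) := rfl
    rw [htel m x, e0, hgx, ← eψ, ← eφ, Finset.sum_sub_distrib]
    ring
  -- norm bound on tails
  have htail : ∀ m, deltaNorm (F (K m) - g) ≤ (1/2:ℝ)^m * 4 := by
    intro m
    have hmem : sphereSup (fun x => ∑' j, φ (j + m) x) + sphereSup (fun x => ∑' j, ψ (j + m) x)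
        ∈ deltaSet (F (K m) - g) :=
      ⟨_, _, (hΦ m).1, (hΨ m).1, hFmg m, rfl⟩
    have hsub : Summable (fun j : ℕ => ((1:ℝ)/2)^(j+m)) := by
      simpa using (summable_nat_add_iff (f := fun j => ((1:ℝ)/2)^j) m).mpr summable_geometric_two
    have htψ : (∑' j, sphereSup (ψ (j + m))) ≤ ∑' j : ℕ, ((1:ℝ)/2)^(j+m) :=
      Summable.tsum_le_tsum (fun j => hcψ (j + m)) ((summable_nat_add_iff m).mpr hsψ) hsub
    have htφ : (∑' j, sphereSup (φ (j + m))) ≤ ∑' j : ℕ, ((1:ℝ)/2)^(j+m) :=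
      Summable.tsum_le_tsum (fun j => hcφ (j + m)) ((summable_nat_add_iff m).mpr hsφ) hsub
    have hgeo : (∑' j : ℕ, ((1:ℝ)/2)^(j+m)) = (1/2:ℝ)^m * 2 := by
      have : ∀ j : ℕ, ((1:ℝ)/2)^(j+m) = (1/2:ℝ)^m * (1/2:ℝ)^j := by
        intro j; rw [pow_add]; ring
      rw [tsum_congr this, tsum_mul_left, tsum_geometric_two]
    have hbψ : sphereSup (fun x => ∑' j, ψ (j + m) x) ≤ ∑' j, sphereSup (ψ (j + m)) := by
      refine sphereSup_le (tsum_nonneg (fun j => sphereSup_nonneg _)) (fun x hx => ?_)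
      have hx1 : ‖x‖ = 1 := by simpa using hx
      have := (hΨ m).2 x
      rwa [hx1, mul_one] at this
    have hbφ : sphereSup (fun x => ∑' j, φ (j + m) x) ≤ ∑' j, sphereSup (φ (j + m)) := by
      refine sphereSup_le (tsum_nonneg (fun j => sphereSup_nonneg _)) (fun x hx => ?_)
      have hx1 : ‖x‖ = 1 := by simpa using hx
      have := (hΦ m).2 x
      rwa [hx1, mul_one] at this
    have := deltaNorm_le hmem
    rw [hgeo] at htψ htφ
    linarith
  -- conclusion
  refine ⟨g, hgInD, ?_⟩
  rw [Metric.tendsto_atTop]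
  intro ε hε
  obtain ⟨m, hm⟩ := exists_pow_lt_of_lt_one (show (0:ℝ) < ε/5 by linarith)
    (show (1/2:ℝ) < 1 by norm_num)
  refine ⟨K m, fun k hk => ?_⟩
  have h1 : deltaNorm (F k - F (K m)) < (1/2:ℝ)^m :=
    hN m k (le_trans (hKN m) hk) (K m) (hKN m)
  have h2 := htail m
  have htri : deltaNorm (F k - g) ≤
      deltaNorm (F k - F (K m)) + deltaNorm (F (K m) - g) := by
    have := deltaNorm_triangle ((hInD k).sub (hInD (K m))) ((hInD (K m)).sub hgInD)
    rwa [sub_add_sub_cancel] at this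
  have hnn : 0 ≤ deltaNorm (F k - g) := deltaNorm_nonneg _
  rw [Real.dist_eq, sub_zero, abs_of_nonneg hnn]
  calc deltaNorm (F k - g) ≤ _ := htri
    _ < (1/2:ℝ)^m + (1/2:ℝ)^m * 4 := by linarith
    _ = 5 * (1/2:ℝ)^m := by ring
    _ < ε := by linarith

end Aux

/-- `deltaNorm` is a norm on `Δ`, and `Δ` is complete for it. -/
theorem deltaNorm_is_complete_norm {n : ℕ} :
    (∀ f : EuclideanSpace ℝ (Fin n) → ℝ, InDelta f → (deltaNorm f = 0 ↔ f = 0)) ∧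
    (∀ f : EuclideanSpace ℝ (Fin n) → ℝ, InDelta f →
      ∀ c : ℝ, deltaNorm (c • f) = |c| * deltaNorm f) ∧
    (∀ f g : EuclideanSpace ℝ (Fin n) → ℝ, InDelta f → InDelta g →
      deltaNorm (f + g) ≤ deltaNorm f + deltaNorm g) ∧
    (∀ F : ℕ → (EuclideanSpace ℝ (Fin n) → ℝ), (∀ k, InDelta (F k)) →
      (∀ ε : ℝ, 0 < ε → ∃ N, ∀ m ≥ N, ∀ k ≥ N, deltaNorm (F m - F k) < ε) →
      ∃ g, InDelta g ∧
        Filter.Tendsto (fun k => deltaNorm (F k - g)) Filter.atTop (nhds 0)) := by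
  refine ⟨?_, ?_, ?_, delta_complete⟩
  · intro f hf
    constructor
    · intro h0
      funext x
      have h1 := abs_le_deltaNorm hf x
      rw [h0, zero_mul] at h1
      simpa using abs_nonpos_iff.mp h1
    · rintro rfl; exact deltaNorm_zero
  · intro f _ c; exact deltaNorm_smul c f
  · intro f g hf hg; exact deltaNorm_triangle hf hg
end

section
/- In ℝ⁴, the symmetric (2,2)-superform Ω = dx₁∧dx₂∧dξ₃∧dξ₄ + dx₃∧dx₄∧dξ₁∧dξ₂ satisfies T(Ω) ≠ 0, where T = Σᵢ dxᵢ ∧ δ_{ξᵢ} (δ_{ξᵢ} is contraction with ∂/∂ξᵢ); consequently Ω cannot be written as a linear combination of elementary forms α₁∧α₁^#∧α₂∧α₂^#, since T annihilates every elementary form. -/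
noncomputable section

/-- The model for superforms with constant coefficients on `ℝⁿ`: the exterior algebra
over `ℝⁿ_x ⊕ ℝⁿ_ξ`, with generators `dx_i` (first factor) and `dξ_i` (second factor). -/
abbrev SVec (n : ℕ) := (Fin n → ℝ) × (Fin n → ℝ)
abbrev SAlg (n : ℕ) := ExteriorAlgebra ℝ (SVec n)

/-- The `(1,0)`-form with coefficient vector `v`, i.e. `Σ v_i dx_i`. -/
def dX {n : ℕ} (v : Fin n → ℝ) : SAlg n := ExteriorAlgebra.ι ℝ (v, 0)

/-- The `(0,1)`-form `v^# = Σ v_i dξ_i`. -/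
def dXi {n : ℕ} (v : Fin n → ℝ) : SAlg n := ExteriorAlgebra.ι ℝ (0, v)

/-- The elementary `(p,p)`-form `α₁∧α₁^#∧…∧α_p∧α_p^#`. -/
def elemForm {n p : ℕ} (a : Fin p → (Fin n → ℝ)) : SAlg n :=
  (List.ofFn fun i => dX (a i) * dXi (a i)).prod

/-- The dual functional picking the `i`-th `ξ`-coordinate, used for contraction
`δ_{ξ_i}` with `∂/∂ξ_i`. -/
def xiDual (n : ℕ) (i : Fin n) : Module.Dual ℝ (SVec n) :=
  (LinearMap.proj i).comp (LinearMap.snd ℝ (Fin n → ℝ) (Fin n → ℝ))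

/-- The operator `T = Σ dx_i ∧ δ_{ξ_i}` on superforms. -/
def superT {n : ℕ} (ω : SAlg n) : SAlg n :=
  ∑ i, dX (Pi.single i 1) * (CliffordAlgebra.contractLeft (xiDual n i) ω)

/-- The symmetric `(2,2)`-form `dx₁∧dx₂∧dξ₃∧dξ₄ + dx₃∧dx₄∧dξ₁∧dξ₂` on `ℝ⁴`. -/
def Omega4 : SAlg 4 :=
  dX (Pi.single 0 1) * dX (Pi.single 1 1) * dXi (Pi.single 2 1) * dXi (Pi.single 3 1) +
  dX (Pi.single 2 1) * dX (Pi.single 3 1) * dXi (Pi.single 0 1) * dXi (Pi.single 1 1)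

-- === auxiliary lemmas ===
open CliffordAlgebra

def xDual (n : ℕ) (i : Fin n) : Module.Dual ℝ (SVec n) :=
  (LinearMap.proj i).comp (LinearMap.fst ℝ (Fin n → ℝ) (Fin n → ℝ))

@[simp] lemma cL_dX_mul {n : ℕ} (f : Module.Dual ℝ (SVec n)) (v : Fin n → ℝ) (b : SAlg n) :
    contractLeft (Q := 0) f (dX v * b) = f (v, 0) • b - dX v * contractLeft (Q := 0) f b :=
  contractLeft_ι_mul f (v,0) b

@[simp] lemma cL_dXi_mul {n : ℕ} (f : Module.Dual ℝ (SVec n)) (v : Fin n → ℝ) (b : SAlg n) :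
    contractLeft (Q := 0) f (dXi v * b) = f (0, v) • b - dXi v * contractLeft (Q := 0) f b :=
  contractLeft_ι_mul f (0,v) b

@[simp] lemma cL_dX {n : ℕ} (f : Module.Dual ℝ (SVec n)) (v : Fin n → ℝ) :
    contractLeft (Q := 0) f (dX v) = algebraMap ℝ _ (f (v, 0)) :=
  contractLeft_ι _ f (v,0)

@[simp] lemma cL_dXi {n : ℕ} (f : Module.Dual ℝ (SVec n)) (v : Fin n → ℝ) :
    contractLeft (Q := 0) f (dXi v) = algebraMap ℝ _ (f (0, v)) :=
  contractLeft_ι _ f (0,v)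

@[simp] lemma cL_one {n : ℕ} (f : Module.Dual ℝ (SVec n)) :
    contractLeft (Q := 0) f (1 : SAlg n) = 0 := contractLeft_one _ f

@[simp] lemma xiDual_apply {n : ℕ} (i : Fin n) (v w : Fin n → ℝ) :
    xiDual n i (v, w) = w i := rfl

@[simp] lemma xDual_apply {n : ℕ} (i : Fin n) (v w : Fin n → ℝ) :
    xDual n i (v, w) = v i := rfl

lemma sum_smul_dX {n : ℕ} (v : Fin n → ℝ) :
    ∑ i, v i • dX (Pi.single i 1) = dX v := by
  let L : (Fin n → ℝ) →ₗ[ℝ] SAlg n :=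
    (ExteriorAlgebra.ι ℝ).comp (LinearMap.inl ℝ (Fin n → ℝ) (Fin n → ℝ))
  have hL : ∀ w, dX w = L w := fun w => rfl
  simp_rw [hL, ← map_smul, ← map_sum]
  congr 1
  have : ∀ i : Fin n, v i • (Pi.single i 1 : Fin n → ℝ) = Pi.single i (v i) := by
    intro i; rw [← Pi.single_smul, smul_eq_mul, mul_one]
  simp_rw [this, Finset.univ_sum_single]

def superTL (n : ℕ) : SAlg n →ₗ[ℝ] SAlg n :=
  ∑ i, (LinearMap.mulLeft ℝ (dX (Pi.single i 1))) ∘ₗ (contractLeft (Q := 0) (xiDual n i))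

lemma superT_eq {n : ℕ} (ω : SAlg n) : superT ω = superTL n ω := by
  simp [superT, superTL, LinearMap.sum_apply]


@[simp] lemma mul_algebraMap' {n : ℕ} (x : SAlg n) (r : ℝ) :
    x * algebraMap ℝ (SAlg n) r = r • x := by
  rw [← Algebra.commutes, ← Algebra.smul_def]

lemma ι_swap_mul {n : ℕ} (u w : SVec n) (x : SAlg n) :
    ExteriorAlgebra.ι ℝ u * (ExteriorAlgebra.ι ℝ w * x) =
      -(ExteriorAlgebra.ι ℝ w * (ExteriorAlgebra.ι ℝ u * x)) := by
  rw [← mul_assoc, ← mul_assoc, eq_neg_of_add_eq_zero_left (ExteriorAlgebra.ι_add_mul_swap u w),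
    neg_mul]

lemma zA {n : ℕ} (A : Fin n → ℝ) (x : SAlg n) : dX A * (dX A * x) = 0 := by
  rw [← mul_assoc, dX, ExteriorAlgebra.ι_sq_zero, zero_mul]

lemma zB {n : ℕ} (A B : Fin n → ℝ) : dX B * (dX A * (dXi A * dX B)) = 0 := by
  rw [show dX B * (dX A * (dXi A * dX B)) = -(dX A * (dX B * (dXi A * dX B))) from
    ι_swap_mul _ _ _,
    show dX B * (dXi A * dX B) = -(dXi A * (dX B * dX B)) from ι_swap_mul _ _ _,
    show dX B * dX B = 0 from ExteriorAlgebra.ι_sq_zero _, mul_zero, neg_zero, mul_zero, neg_zero]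

lemma superT_elem2' {n : ℕ} (A B : Fin n → ℝ) :
    superT (dX A * (dXi A * (dX B * dXi B))) = 0 := by
  unfold superT
  simp only [cL_dX_mul, cL_dXi_mul, cL_dXi, cL_dX, cL_one, xiDual_apply, Pi.zero_apply,
    zero_smul, zero_sub, mul_neg, mul_sub, mul_add, mul_algebraMap', mul_smul_comm, mul_zero,
    sub_zero, neg_neg, smul_neg]
  simp only [sub_neg_eq_add, neg_add, ← smul_mul_assoc, Finset.sum_add_distrib,
    ← Finset.sum_neg_distrib, ← Finset.sum_mul, sum_smul_dX, zA, zB, neg_zero, add_zero]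
  simp only [← neg_mul, ← Finset.sum_mul, Finset.sum_neg_distrib, sum_smul_dX, neg_mul, zA, zB,
    neg_zero, add_zero]

lemma part2 : ∀ a : Fin 2 → (Fin 4 → ℝ), superT (elemForm a) = 0 := by
  intro a
  have he : elemForm a = dX (a 0) * (dXi (a 0) * (dX (a 1) * dXi (a 1))) := by
    simp [elemForm, List.ofFn_succ, mul_assoc]
  rw [he, superT_elem2']

set_option maxHeartbeats 2000000 in
@[simp] lemma xiDual_single {n : ℕ} (i j : Fin n) (v : Fin n → ℝ) :
    xiDual n i (v, Pi.single j 1) = if j = i then 1 else 0 := by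
  simp [Pi.single_apply, eq_comm]
@[simp] lemma xiDual_dX_coeff {n : ℕ} (i : Fin n) (v : Fin n → ℝ) :
    xiDual n i (v, 0) = 0 := rfl
@[simp] lemma xDual_single {n : ℕ} (i j : Fin n) (w : Fin n → ℝ) :
    xDual n i (Pi.single j 1, w) = if j = i then 1 else 0 := by
  simp [Pi.single_apply, eq_comm]
@[simp] lemma xDual_dXi_coeff {n : ℕ} (i : Fin n) (w : Fin n → ℝ) :
    xDual n i (0, w) = 0 := rfl

example : True := trivial

set_option maxHeartbeats 800000 in
lemma TOmega : superT Omega4 =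
    dX (Pi.single 2 1) * (dX (Pi.single 0 1) * (dX (Pi.single 1 1) * dXi (Pi.single 3 1))) -
    dX (Pi.single 3 1) * (dX (Pi.single 0 1) * (dX (Pi.single 1 1) * dXi (Pi.single 2 1))) +
    (dX (Pi.single 0 1) * (dX (Pi.single 2 1) * (dX (Pi.single 3 1) * dXi (Pi.single 1 1))) -
     dX (Pi.single 1 1) * (dX (Pi.single 2 1) * (dX (Pi.single 3 1) * dXi (Pi.single 0 1)))) := by
  unfold superT Omega4
  rw [Fin.sum_univ_four]
  simp only [mul_assoc, map_add, cL_dX_mul, cL_dXi_mul, cL_dXi, cL_dX, cL_one, xiDual_dX_coeff,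
    xiDual_single, xDual_single, Fin.reduceEq, reduceIte, ite_true, ite_false, zero_smul, one_smul, zero_sub,
    sub_zero, mul_neg, neg_neg, mul_sub, mul_add, mul_zero, zero_mul, mul_algebraMap',
    map_zero, neg_zero, zero_add, add_zero, sub_self, map_one, map_ofNat]
  simp only [mul_one]
  abel

set_option maxHeartbeats 800000 in
lemma part1 : superT Omega4 ≠ 0 := by
  intro h
  have h2 := congrArg (fun ω : SAlg 4 => contractLeft (Q := (0 : QuadraticForm ℝ (SVec 4))) (xDual 4 2)
      (contractLeft (Q := 0) (xDual 4 1) (contractLeft (Q := 0) (xDual 4 0)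
      (contractLeft (Q := 0) (xiDual 4 3) ω)))) h
  rw [TOmega] at h2
  simp only [map_add, map_sub, map_neg, map_smul, map_zero, cL_dX_mul, cL_dXi_mul, cL_dXi, cL_dX,
    cL_one, xiDual_dX_coeff, xDual_dXi_coeff, xiDual_single, xDual_single, Fin.reduceEq,
    reduceIte, ite_true, ite_false, zero_smul, one_smul, zero_sub, sub_zero, mul_neg, neg_neg,
    mul_sub, mul_add, mul_zero, zero_mul, mul_algebraMap', neg_zero, zero_add, add_zero,
    smul_zero, map_one] at h2
  norm_num at h2

/-- `T(Ω) ≠ 0` for `Ω = dx₁∧dx₂∧dξ₃∧dξ₄ + dx₃∧dx₄∧dξ₁∧dξ₂` in `ℝ⁴`, while `T`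
annihilates every elementary form; consequently `Ω` is not a linear combination of
elementary forms. -/
theorem omega4_not_strong :
    superT Omega4 ≠ 0 ∧
    (∀ a : Fin 2 → (Fin 4 → ℝ), superT (elemForm a) = 0) ∧
    ¬ ∃ (m : ℕ) (c : Fin m → ℝ) (a : Fin m → Fin 2 → (Fin 4 → ℝ)),
        Omega4 = ∑ i, c i • elemForm (a i) := by
  refine ⟨part1, part2, ?_⟩
  rintro ⟨m, c, a, h⟩
  apply part1
  rw [h, superT_eq, map_sum]
  simp only [map_smul, ← superT_eq, part2, smul_zero, Finset.sum_const_zero]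
end
end
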